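/- Let $H$ be a bipartite graph with parts $X$ and $Y$ such that every vertex $x \in X$ has degree less than $d$. Then the edge set of $H$ can be decomposed into $d+1$ parts $\mathcal{F}_1, \ldots, \mathcal{F}_d, R$ such that the $\mathcal{F}_i$ are pairwise isomorphic star forests, each with at most $|Y|$ components, whose stars have size at most $\Delta(H)/d$, and $\Delta(R) < d$. -/

import Mathlib

open Finset

private lemma divmod_card (n d t : ℕ) (hd : 0 < d) (ht : t < n) :
    ((Finset.univ : Finset (Fin (n * d))).filter fun u : Fin (n*d) => (u : ℕ) / d = t).card = d := by
  have key : ∀ u : ℕ, (u / d = t) ↔ (t * d ≤ u ∧ u < t * d + d) := by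
    intro u
    constructor
    · rintro rfl
      refine ⟨Nat.div_mul_le_self u d, ?_⟩
      have h1 : u / d * d + u % d = u := Nat.div_add_mod' u d
      have h2 : u % d < d := Nat.mod_lt u hd
      omega
    · rintro ⟨h1, h2⟩
      exact Nat.div_eq_of_lt_le h1 (by rw [Nat.succ_mul]; omega)
  have hcard : ((Finset.univ : Finset (Fin (n * d))).filter fun u : Fin (n*d) => (u : ℕ) / d = t).card
      = (Finset.Ico (t * d) (t * d + d)).card := by
    refine Finset.card_bij (fun u _ => (u : ℕ)) ?_ ?_ ?_
    · intro u hu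
      rw [Finset.mem_Ico]
      exact (key u).1 (Finset.mem_filter.1 hu).2
    · intro a ha b hb h
      exact Fin.ext h
    · intro v hv
      rw [Finset.mem_Ico] at hv
      have hvlt : v < n * d := by
        have : t * d + d ≤ n * d := by
          have : (t+1) * d ≤ n * d := Nat.mul_le_mul_right d ht
          rwa [Nat.succ_mul] at this
        omega
      exact ⟨⟨v, hvlt⟩, Finset.mem_filter.2 ⟨Finset.mem_univ _, (key v).2 ⟨hv.1, hv.2⟩⟩, rfl⟩
  rw [hcard, Nat.card_Ico]
  omega

private lemma exists_perm_pos (n k : ℕ) (hk : 0 < k) (M : Fin n → Fin n → ℕ)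
    (hrow : ∀ i, ∑ j, M i j = k) (hcol : ∀ j, ∑ i, M i j = k) :
    ∃ σ : Equiv.Perm (Fin n), ∀ i, 0 < M i (σ i) := by
  classical
  have hall : ∀ A : Finset (Fin n),
      A.card ≤ (A.biUnion fun i => univ.filter fun j => 0 < M i j).card := by
    intro A
    set N := A.biUnion fun i => univ.filter fun j => 0 < M i j with hN
    have h0 : ∀ i ∈ A, ∑ j ∈ N, M i j = ∑ j, M i j := by
      intro i hi
      apply Finset.sum_subset (Finset.subset_univ N)
      intro j _ hj
      by_contra h
      exact hj (Finset.mem_biUnion.2 ⟨i, hi, Finset.mem_filter.2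
        ⟨Finset.mem_univ _, Nat.pos_of_ne_zero h⟩⟩)
    have h1 : A.card * k ≤ N.card * k := by
      calc A.card * k = ∑ i ∈ A, ∑ j, M i j := by
            rw [Finset.sum_congr rfl (fun i _ => hrow i), Finset.sum_const, smul_eq_mul]
        _ = ∑ i ∈ A, ∑ j ∈ N, M i j := by
            exact (Finset.sum_congr rfl h0).symm
        _ ≤ ∑ i, ∑ j ∈ N, M i j := Finset.sum_le_sum_of_subset (Finset.subset_univ A)
        _ = ∑ j ∈ N, ∑ i, M i j := Finset.sum_comm
        _ = N.card * k := by
            rw [Finset.sum_congr rfl (fun j _ => hcol j), Finset.sum_const, smul_eq_mul]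
    exact Nat.le_of_mul_le_mul_right h1 hk
  obtain ⟨f, hinj, hf⟩ := (Finset.all_card_le_biUnion_card_iff_exists_injective
    (fun i : Fin n => univ.filter fun j => 0 < M i j)).1 hall
  exact ⟨Equiv.ofBijective f ((Finite.injective_iff_bijective).1 hinj),
    fun i => (Finset.mem_filter.1 (hf i)).2⟩

private lemma matrix_decomp (n : ℕ) : ∀ (k : ℕ) (M : Fin n → Fin n → ℕ),
    (∀ i, ∑ j, M i j = k) → (∀ j, ∑ i, M i j = k) →
    ∃ c : Fin k → Equiv.Perm (Fin n),
      ∀ i j, M i j = ((univ : Finset (Fin k)).filter fun l => c l i = j).card := by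
  intro k
  induction k with
  | zero =>
    intro M hrow _
    refine ⟨Fin.elim0, fun i j => ?_⟩
    have h1 : M i j ≤ ∑ j', M i j' := Finset.single_le_sum (fun _ _ => Nat.zero_le _) (mem_univ j)
    rw [hrow i] at h1
    simp [Nat.le_zero.1 h1]
  | succ k ih =>
    intro M hrow hcol
    obtain ⟨σ, hσ⟩ := exists_perm_pos n (k+1) (Nat.succ_pos k) M hrow hcol
    set M' : Fin n → Fin n → ℕ := fun i j => M i j - if σ i = j then 1 else 0 with hM'
    have hpt : ∀ i j, M i j = (if σ i = j then 1 else 0) + M' i j := by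
      intro i j
      by_cases h : σ i = j
      · have := hσ i
        rw [h] at this
        simp only [hM', h, if_true]
        omega
      · simp [hM', h]
    have hone : ∀ i, ∑ j, (if σ i = j then (1:ℕ) else 0) = 1 := by
      intro i; simp
    have hone' : ∀ j, ∑ i, (if σ i = j then (1:ℕ) else 0) = 1 := by
      intro j
      have : ∀ i : Fin n, (σ i = j) = (i = σ.symm j) := by
        intro i
        simp [Equiv.eq_symm_apply]
      simp only [this]
      simp
    have hrow' : ∀ i, ∑ j, M' i j = k := by
      intro i
      have h2 : ∑ j, M i j = ∑ j, ((if σ i = j then (1:ℕ) else 0) + M' i j) :=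
        Finset.sum_congr rfl fun j _ => hpt i j
      rw [Finset.sum_add_distrib, hone i, hrow i] at h2
      omega
    have hcol' : ∀ j, ∑ i, M' i j = k := by
      intro j
      have h2 : ∑ i, M i j = ∑ i, ((if σ i = j then (1:ℕ) else 0) + M' i j) :=
        Finset.sum_congr rfl fun i _ => hpt i j
      rw [Finset.sum_add_distrib, hone' j, hcol j] at h2
      omega
    obtain ⟨c, hc⟩ := ih M' hrow' hcol'
    refine ⟨Fin.cons σ c, fun i j => ?_⟩
    rw [hpt i j, hc i j, Finset.card_filter, Finset.card_filter, Fin.sum_univ_succ]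
    simp


set_option maxHeartbeats 2000000

/-- Decomposition of a bipartite graph, all of whose `X`-side degrees are less than `d`,
into `d` pairwise isomorphic star forests (each star forest recorded by its leaf sets
`L i y` around centres `y ∈ Y`, with at most `|Y|` components and stars of size at most
`Δ(H)/d`) together with a remainder of maximum degree less than `d`. -/
theorem bipartite_star_forest_decomposition {V : Type*} [Fintype V] [DecidableEq V]
    (H : SimpleGraph V) [DecidableRel H.Adj] (X Y : Finset V) (d : ℕ) (hd : 0 < d)
    (hXY : Disjoint X Y)
    (hbip : ∀ e ∈ H.edgeFinset, ∃ x ∈ X, ∃ y ∈ Y, e = s(x, y))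
    (hdeg : ∀ x ∈ X, H.degree x < d) :
    ∃ (L : Fin d → V → Finset V) (R : Finset (Sym2 V)),
      -- each star is centred at a vertex of `Y` with leaves among its neighbours
      (∀ i y, (L i y).Nonempty → y ∈ Y) ∧
      (∀ i y x, x ∈ L i y → H.Adj y x) ∧
      -- the stars of one forest are pairwise vertex-disjoint
      (∀ i y y', y ≠ y' → (L i y).Nonempty → (L i y').Nonempty →
        Disjoint (insert y (L i y)) (insert y' (L i y'))) ∧
      -- at most |Y| components
      (∀ i, (Finset.univ.filter fun y => (L i y).Nonempty).card ≤ Y.card) ∧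
      -- stars have size at most Δ(H)/d
      (∀ i y, (L i y).card * d ≤ H.maxDegree) ∧
      -- the star forests are pairwise isomorphic: same multiset of (nonzero) star sizes
      (∀ i j, ((Finset.univ.val.map fun y => (L i y).card).filter (· ≠ 0))
            = ((Finset.univ.val.map fun y => (L j y).card).filter (· ≠ 0))) ∧
      -- the star forests together with R decompose the edges of H
      (∀ i j, i ≠ j →
        Disjoint (Finset.univ.biUnion fun y => (L i y).image fun x => s(y, x))
                 (Finset.univ.biUnion fun y => (L j y).image fun x => s(y, x))) ∧
      (∀ i, Disjoint (Finset.univ.biUnion fun y => (L i y).image fun x => s(y, x)) R) ∧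
      (Finset.univ.biUnion
          (fun i : Fin d => Finset.univ.biUnion fun y => (L i y).image fun x => s(y, x))
        ∪ R = H.edgeFinset) ∧
      -- the remainder has maximum degree less than d
      (∀ v : V, (R.filter fun e => v ∈ e).card < d) := by
  classical
  have hYX : ∀ {y x : V}, y ∈ Y → H.Adj y x → x ∈ X := by
    intro y x hy hadj
    have he : s(y, x) ∈ H.edgeFinset := by
      rw [SimpleGraph.mem_edgeFinset, SimpleGraph.mem_edgeSet]; exact hadj
    obtain ⟨x', hx', y', hy', hexy⟩ := hbip _ he
    rw [Sym2.eq_iff] at hexy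
    rcases hexy with ⟨h1, h2⟩ | ⟨h1, h2⟩
    · have : y ∈ X := by rw [h1]; exact hx'
      exact absurd hy (Finset.disjoint_left.1 hXY this)
    · rw [h2]; exact hx'
  set s' : V → ℕ := fun v => if v ∈ Y then H.degree v / d else 0 with hs'
  have hs'Y : ∀ y ∈ Y, s' y = H.degree y / d := fun y hy => by simp [hs', hy]
  have hs'nY : ∀ y, y ∉ Y → s' y = 0 := fun y hy => by simp [hs', hy]
  have hs'le : ∀ y, s' y * d ≤ H.degree y := by
    intro y
    by_cases hy : y ∈ Y
    · rw [hs'Y y hy]; exact Nat.div_mul_le_self _ _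
    · rw [hs'nY y hy]; simp
  have hex : ∀ y : V, ∃ t ⊆ H.neighborFinset y, t.card = s' y * d := by
    intro y
    apply Finset.exists_subset_card_eq
    rw [H.card_neighborFinset_eq_degree]
    exact hs'le y
  choose E0 hE0sub hE0card using hex
  have hE0adj : ∀ {y x}, x ∈ E0 y → H.Adj y x := fun {y x} hx =>
    (H.mem_neighborFinset y x).1 (hE0sub y hx)
  have hE0Y : ∀ {y}, (E0 y).Nonempty → y ∈ Y := by
    rintro y ⟨x, hx⟩
    by_contra hy
    have h0 : (E0 y).card = 0 := by rw [hE0card, hs'nY y hy, Nat.zero_mul]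
    rw [Finset.card_eq_zero] at h0
    rw [h0] at hx; exact absurd hx (Finset.notMem_empty x)
  have hE0X : ∀ y, E0 y ⊆ X := fun y x hx => hYX (hE0Y ⟨x, hx⟩) (hE0adj hx)
  set eqv : ∀ y : V, {x // x ∈ E0 y} ≃ Fin (s' y * d) :=
    fun y => (E0 y).equivFin.trans (finCongr (hE0card y)) with heqv
  set deg0 : {x // x ∈ X} → ℕ := fun x => (univ.filter fun y : V => x.1 ∈ E0 y).card with hdeg0
  have hdeg0lt : ∀ x, deg0 x < d := by
    intro x
    have hsub : (univ.filter fun y : V => x.1 ∈ E0 y) ⊆ H.neighborFinset x.1 := by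
      intro y hy
      rw [SimpleGraph.mem_neighborFinset]
      exact (hE0adj (Finset.mem_filter.1 hy).2).symm
    calc deg0 x ≤ (H.neighborFinset x.1).card := Finset.card_le_card hsub
      _ = H.degree x.1 := H.card_neighborFinset_eq_degree x.1
      _ < d := hdeg x.1 x.2
  set cx : {x // x ∈ X} → ℕ := fun x => d - deg0 x with hcx
  have hfilterX : ∀ y, X.filter (· ∈ E0 y) = E0 y := by
    intro y
    apply Finset.ext; intro x
    simp only [Finset.mem_filter]
    exact ⟨fun h => h.2, fun h => ⟨hE0X y h, h⟩⟩
  have hdeg0sum : ∑ x : {x // x ∈ X}, deg0 x = (∑ y : V, s' y) * d := by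
    calc ∑ x : {x // x ∈ X}, deg0 x
        = ∑ x : {x // x ∈ X}, ∑ y : V, (if x.1 ∈ E0 y then 1 else 0) := by
          refine Finset.sum_congr rfl fun x _ => ?_
          simp only [hdeg0, Finset.card_filter]
      _ = ∑ y : V, ∑ x : {x // x ∈ X}, (if x.1 ∈ E0 y then 1 else 0) := Finset.sum_comm
      _ = ∑ y : V, (E0 y).card := by
          refine Finset.sum_congr rfl fun y _ => ?_
          rw [Finset.sum_coe_sort X (fun v => if v ∈ E0 y then (1:ℕ) else 0)]
          rw [← Finset.card_filter, hfilterX]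
      _ = (∑ y : V, s' y) * d := by
          rw [Finset.sum_congr rfl fun y _ => hE0card y, ← Finset.sum_mul]
  have hcard_univX : Fintype.card {x // x ∈ X} = X.card := Fintype.card_coe X
  have hSle : (∑ y : V, s' y) ≤ X.card := by
    by_contra h
    push_neg at h
    have h1 : X.card * d < (∑ y : V, s' y) * d :=
      Nat.mul_lt_mul_of_lt_of_le h (le_refl d) hd
    have h2 : ∑ x : {x // x ∈ X}, deg0 x ≤ ∑ x : {x // x ∈ X}, d :=
      Finset.sum_le_sum fun x _ => le_of_lt (hdeg0lt x)
    rw [hdeg0sum, Finset.sum_const, smul_eq_mul, Finset.card_univ, hcard_univX] at h2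
    omega
  have hcxsum : ∑ x : {x // x ∈ X}, cx x = (X.card - ∑ y : V, s' y) * d := by
    have h1 : ∑ x : {x // x ∈ X}, (cx x + deg0 x) = X.card * d := by
      have he : ∀ x : {x // x ∈ X}, cx x + deg0 x = d := by
        intro x
        have := hdeg0lt x
        simp only [hcx]
        omega
      rw [Finset.sum_congr rfl fun x _ => he x, Finset.sum_const, smul_eq_mul,
        Finset.card_univ, hcard_univX]
    rw [Finset.sum_add_distrib, hdeg0sum] at h1
    have hexp : (X.card - ∑ y : V, s' y) * d + (∑ y : V, s' y) * d = X.card * d := by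
      rw [← Nat.add_mul]
      congr 1
      omega
    omega
  set p := X.card - ∑ y : V, s' y with hp
  have hcardsig : Fintype.card (Σ x : {x // x ∈ X}, Fin (cx x)) = p * d := by
    rw [Fintype.card_sigma]
    simp only [Fintype.card_fin]
    rw [hcxsum]
  set ψ : (Σ x : {x // x ∈ X}, Fin (cx x)) ≃ Fin (p * d) :=
    Fintype.equivFinOfCardEq hcardsig with hψ
  set m : ((Σ y : V, Fin (s' y)) ⊕ Fin p) → {x // x ∈ X} → ℕ := fun a x =>
    Sum.elim
      (fun yj : Σ y : V, Fin (s' y) =>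
        ((E0 yj.1).attach.filter fun e =>
          e.1 = x.1 ∧ ((eqv yj.1 e : ℕ) / d) = (yj.2 : ℕ)).card)
      (fun t : Fin p =>
        (univ.filter fun j : Fin (cx x) => ((ψ ⟨x, j⟩ : ℕ) / d) = (t : ℕ)).card) a
    with hm
  -- row sums for slots
  have hrow_slot : ∀ yj : (Σ y : V, Fin (s' y)),
      ∑ x : {x // x ∈ X}, m (Sum.inl yj) x = d := by
    rintro ⟨y, j⟩
    have h1 : ∀ x : {x // x ∈ X},
        (((E0 y).attach.filter fun e => ((eqv y e : ℕ) / d) = (j : ℕ)).filter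
          fun e => (⟨e.1, hE0X y e.2⟩ : {x // x ∈ X}) = x)
        = ((E0 y).attach.filter fun e => e.1 = x.1 ∧ ((eqv y e : ℕ) / d) = (j : ℕ)) := by
      intro x
      rw [Finset.filter_filter]
      apply Finset.filter_congr
      intro e _
      rw [Subtype.ext_iff]
      simp only [and_comm]
    have h2 : ((E0 y).attach.filter fun e => ((eqv y e : ℕ) / d) = (j : ℕ)).card = d := by
      have hb : ((E0 y).attach.filter fun e => ((eqv y e : ℕ) / d) = (j : ℕ)).card
          = ((univ : Finset (Fin (s' y * d))).filter
              fun u : Fin (s' y * d) => (u : ℕ) / d = (j : ℕ)).card := by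
        refine Finset.card_bij (fun e _ => eqv y e) ?_ ?_ ?_
        · intro e he
          exact Finset.mem_filter.2 ⟨Finset.mem_univ _, (Finset.mem_filter.1 he).2⟩
        · intro a _ b _ h
          exact (eqv y).injective h
        · intro u hu
          refine ⟨(eqv y).symm u, Finset.mem_filter.2 ⟨Finset.mem_attach _ _, ?_⟩, ?_⟩
          · simp only [Equiv.apply_symm_apply]
            exact (Finset.mem_filter.1 hu).2
          · exact (eqv y).apply_symm_apply u
      rw [hb]
      exact divmod_card (s' y) d (j : ℕ) hd j.isLt
    have h3 := Finset.card_eq_sum_card_fiberwise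
      (f := fun e : {a // a ∈ E0 y} => (⟨e.1, hE0X y e.2⟩ : {x // x ∈ X}))
      (s := (E0 y).attach.filter fun e => ((eqv y e : ℕ) / d) = (j : ℕ))
      (t := univ) (fun e _ => Finset.mem_univ _)
    rw [h2] at h3
    calc ∑ x : {x // x ∈ X}, m (Sum.inl ⟨y, j⟩) x
        = ∑ x : {x // x ∈ X},
            (((E0 y).attach.filter fun e => ((eqv y e : ℕ) / d) = (j : ℕ)).filter
              fun e => (⟨e.1, hE0X y e.2⟩ : {x // x ∈ X}) = x).card := by
          refine Finset.sum_congr rfl fun x _ => ?_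
          rw [h1 x]
          simp only [hm, Sum.elim_inl]
      _ = d := h3.symm
  have hrow_dummy : ∀ t : Fin p, ∑ x : {x // x ∈ X}, m (Sum.inr t) x = d := by
    intro t
    have h1 : ∀ x : {x // x ∈ X},
        (((univ : Finset (Σ x : {x // x ∈ X}, Fin (cx x))).filter
            fun q => ((ψ q : ℕ) / d) = (t : ℕ)).filter fun q => q.1 = x).card
        = (univ.filter fun j : Fin (cx x) => ((ψ ⟨x, j⟩ : ℕ) / d) = (t : ℕ)).card := by
      intro x
      refine (Finset.card_bij (fun (j : Fin (cx x)) _ => (⟨x, j⟩ : Σ x : {x // x ∈ X}, Fin (cx x)))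
        ?_ ?_ ?_).symm
      · intro j hj
        rw [Finset.mem_filter] at hj
        exact Finset.mem_filter.2 ⟨Finset.mem_filter.2 ⟨Finset.mem_univ _, hj.2⟩, rfl⟩
      · intro a _ b _ h
        simpa using h
      · rintro ⟨x', j'⟩ hq
        rw [Finset.mem_filter, Finset.mem_filter] at hq
        obtain ⟨⟨-, hq1⟩, hq2⟩ := hq
        simp only at hq2
        subst hq2
        exact ⟨j', Finset.mem_filter.2 ⟨Finset.mem_univ _, hq1⟩, rfl⟩
    have h2 : ((univ : Finset (Σ x : {x // x ∈ X}, Fin (cx x))).filter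
        fun q => ((ψ q : ℕ) / d) = (t : ℕ)).card = d := by
      have hb : ((univ : Finset (Σ x : {x // x ∈ X}, Fin (cx x))).filter
          fun q => ((ψ q : ℕ) / d) = (t : ℕ)).card
          = ((univ : Finset (Fin (p * d))).filter
              fun u : Fin (p * d) => (u : ℕ) / d = (t : ℕ)).card := by
        refine Finset.card_bij (fun q _ => ψ q) ?_ ?_ ?_
        · intro q hq
          exact Finset.mem_filter.2 ⟨Finset.mem_univ _, (Finset.mem_filter.1 hq).2⟩
        · intro a _ b _ h
          exact ψ.injective h
        · intro u hu
          refine ⟨ψ.symm u, Finset.mem_filter.2 ⟨Finset.mem_univ _, ?_⟩, ψ.apply_symm_apply u⟩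
          simp only [Equiv.apply_symm_apply]
          exact (Finset.mem_filter.1 hu).2
      rw [hb]
      exact divmod_card p d (t : ℕ) hd t.isLt
    have h3 := Finset.card_eq_sum_card_fiberwise
      (f := fun q : Σ x : {x // x ∈ X}, Fin (cx x) => q.1)
      (s := (univ : Finset (Σ x : {x // x ∈ X}, Fin (cx x))).filter
        fun q => ((ψ q : ℕ) / d) = (t : ℕ))
      (t := univ) (fun q _ => Finset.mem_univ _)
    rw [h2] at h3
    calc ∑ x : {x // x ∈ X}, m (Sum.inr t) x
        = ∑ x : {x // x ∈ X},
            (((univ : Finset (Σ x : {x // x ∈ X}, Fin (cx x))).filter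
              fun q => ((ψ q : ℕ) / d) = (t : ℕ)).filter fun q => q.1 = x).card := by
          refine Finset.sum_congr rfl fun x _ => ?_
          rw [h1 x]
          simp only [hm, Sum.elim_inr]
      _ = d := h3.symm
  have hrow_all : ∀ a, ∑ x : {x // x ∈ X}, m a x = d := by
    rintro (yj | t)
    exacts [hrow_slot yj, hrow_dummy t]
  have hcol_inl : ∀ x : {x // x ∈ X},
      ∑ yj : (Σ y : V, Fin (s' y)), m (Sum.inl yj) x = deg0 x := by
    intro x
    rw [← Finset.univ_sigma_univ, Finset.sum_sigma]
    have hper : ∀ y : V, ∑ j : Fin (s' y), m (Sum.inl ⟨y, j⟩) x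
        = if x.1 ∈ E0 y then 1 else 0 := by
      intro y
      have hf : ∀ e : {a // a ∈ E0 y}, ((eqv y e : ℕ) / d) < s' y :=
        fun e => (Nat.div_lt_iff_lt_mul hd).2 (eqv y e).isLt
      have h3 := Finset.card_eq_sum_card_fiberwise
        (f := fun e : {a // a ∈ E0 y} => (⟨(eqv y e : ℕ) / d, hf e⟩ : Fin (s' y)))
        (s := (E0 y).attach.filter fun e => e.1 = x.1)
        (t := univ) (fun e _ => Finset.mem_univ _)
      have h1 : ∀ j : Fin (s' y),
          (((E0 y).attach.filter fun e => e.1 = x.1).filter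
            fun e => (⟨(eqv y e : ℕ) / d, hf e⟩ : Fin (s' y)) = j)
          = ((E0 y).attach.filter fun e => e.1 = x.1 ∧ ((eqv y e : ℕ) / d) = (j : ℕ)) := by
        intro j
        rw [Finset.filter_filter]
        apply Finset.filter_congr
        intro e _
        simp [Fin.ext_iff]
      have h2 : ((E0 y).attach.filter fun e => e.1 = x.1).card
          = if x.1 ∈ E0 y then 1 else 0 := by
        by_cases hxy : x.1 ∈ E0 y
        · rw [if_pos hxy, Finset.card_eq_one]
          refine ⟨⟨x.1, hxy⟩, ?_⟩
          ext e
          simp only [Finset.mem_filter, Finset.mem_singleton, Subtype.ext_iff]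
          exact ⟨fun h => h.2, fun h => ⟨Finset.mem_attach _ _, h⟩⟩
        · rw [if_neg hxy, Finset.card_eq_zero, Finset.filter_eq_empty_iff]
          intro e _
          intro hc
          exact hxy (hc ▸ e.2)
      rw [h3] at h2
      rw [← h2]
      refine Finset.sum_congr rfl fun j _ => ?_
      rw [h1 j]
      simp only [hm, Sum.elim_inl]
    rw [Finset.sum_congr rfl fun y _ => hper y]
    simp only [hdeg0, Finset.card_filter]
  have hcol_inr : ∀ x : {x // x ∈ X}, ∑ t : Fin p, m (Sum.inr t) x = cx x := by
    intro x
    have hf : ∀ j : Fin (cx x), ((ψ ⟨x, j⟩ : ℕ) / d) < p :=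
      fun j => (Nat.div_lt_iff_lt_mul hd).2 (ψ ⟨x, j⟩).isLt
    have h3 := Finset.card_eq_sum_card_fiberwise
      (f := fun j : Fin (cx x) => (⟨(ψ ⟨x, j⟩ : ℕ) / d, hf j⟩ : Fin p))
      (s := (univ : Finset (Fin (cx x)))) (t := univ) (fun j _ => Finset.mem_univ _)
    rw [Finset.card_univ, Fintype.card_fin] at h3
    calc ∑ t : Fin p, m (Sum.inr t) x
        = ∑ t : Fin p, ((univ : Finset (Fin (cx x))).filter
            fun j => (⟨(ψ ⟨x, j⟩ : ℕ) / d, hf j⟩ : Fin p) = t).card := by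
          refine Finset.sum_congr rfl fun t _ => ?_
          simp only [hm, Sum.elim_inr]
          congr 1
          apply Finset.filter_congr
          intro j _
          simp [Fin.ext_iff]
      _ = cx x := h3.symm
  have hcol_m : ∀ x : {x // x ∈ X}, ∑ a : ((Σ y : V, Fin (s' y)) ⊕ Fin p), m a x = d := by
    intro x
    rw [Fintype.sum_sum_type, hcol_inl x, hcol_inr x]
    have := hdeg0lt x
    simp only [hcx]
    omega
  have hcardAB : Fintype.card ((Σ y : V, Fin (s' y)) ⊕ Fin p) = Fintype.card {x // x ∈ X} := by
    have h1 : ∑ a : ((Σ y : V, Fin (s' y)) ⊕ Fin p), ∑ x : {x // x ∈ X}, m a x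
        = Fintype.card ((Σ y : V, Fin (s' y)) ⊕ Fin p) * d := by
      rw [Finset.sum_congr rfl fun a _ => hrow_all a, Finset.sum_const, smul_eq_mul,
        Finset.card_univ]
    have h2 : ∑ x : {x // x ∈ X}, ∑ a : ((Σ y : V, Fin (s' y)) ⊕ Fin p), m a x
        = Fintype.card {x // x ∈ X} * d := by
      rw [Finset.sum_congr rfl fun x _ => hcol_m x, Finset.sum_const, smul_eq_mul,
        Finset.card_univ]
    rw [Finset.sum_comm] at h1
    rw [h1] at h2
    exact Nat.eq_of_mul_eq_mul_right hd h2
  set eA := Fintype.equivFin ((Σ y : V, Fin (s' y)) ⊕ Fin p) with heA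
  set eB : {x // x ∈ X} ≃ Fin (Fintype.card ((Σ y : V, Fin (s' y)) ⊕ Fin p)) :=
    Fintype.equivFinOfCardEq hcardAB.symm with heB
  obtain ⟨cperm, hcperm⟩ := matrix_decomp (Fintype.card ((Σ y : V, Fin (s' y)) ⊕ Fin p)) d
    (fun i j => m (eA.symm i) (eB.symm j))
    (fun i => by rw [Equiv.sum_comp eB.symm (fun x => m (eA.symm i) x)]; exact hrow_all _)
    (fun j => by rw [Equiv.sum_comp eA.symm (fun a => m a (eB.symm j))]; exact hcol_m _)
  set φ : Fin d → ((Σ y : V, Fin (s' y)) ⊕ Fin p) → {x // x ∈ X} :=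
    fun l a => eB.symm (cperm l (eA a)) with hφ
  have hφinj : ∀ l, Function.Injective (φ l) := by
    intro l a b h
    simp only [hφ] at h
    exact eA.injective ((cperm l).injective (eB.symm.injective h))
  have hmcount : ∀ a x, m a x = (univ.filter fun l : Fin d => φ l a = x).card := by
    intro a x
    have h := hcperm (eA a) (eB x)
    simp only [Equiv.symm_apply_apply] at h
    rw [h]
    congr 1
    apply Finset.filter_congr
    intro l _
    simp only [hφ]
    constructor
    · intro hh; rw [hh, Equiv.symm_apply_apply]
    · intro hh; rw [← hh, Equiv.apply_symm_apply]
  set L : Fin d → V → Finset V := fun i y =>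
    univ.image fun j : Fin (s' y) => (φ i (Sum.inl ⟨y, j⟩)).1 with hLdef
  have hLmem : ∀ {i y x}, x ∈ L i y ↔ ∃ j : Fin (s' y), (φ i (Sum.inl ⟨y, j⟩)).1 = x := by
    intro i y x
    simp [hLdef]
  have hslot : ∀ (i : Fin d) (y : V) (j : Fin (s' y)),
      ∃ h : (φ i (Sum.inl ⟨y, j⟩)).1 ∈ E0 y,
        ((eqv y ⟨(φ i (Sum.inl ⟨y, j⟩)).1, h⟩ : ℕ) / d) = (j : ℕ) := by
    intro i y j
    have h1 : 0 < m (Sum.inl ⟨y, j⟩) (φ i (Sum.inl ⟨y, j⟩)) := by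
      rw [hmcount]
      exact Finset.card_pos.2 ⟨i, Finset.mem_filter.2 ⟨Finset.mem_univ _, rfl⟩⟩
    simp only [hm, Sum.elim_inl] at h1
    rw [Finset.card_pos] at h1
    obtain ⟨e, he⟩ := h1
    rw [Finset.mem_filter] at he
    obtain ⟨-, he1, he2⟩ := he
    refine ⟨he1 ▸ e.2, ?_⟩
    have hee : (⟨(φ i (Sum.inl ⟨y, j⟩)).1, he1 ▸ e.2⟩ : {a // a ∈ E0 y}) = e :=
      Subtype.ext he1.symm
    rw [hee]
    exact he2
  have hm_slot_le : ∀ (yj : (Σ y : V, Fin (s' y))) (x : {x // x ∈ X}),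
      m (Sum.inl yj) x ≤ 1 := by
    rintro ⟨y, j⟩ x
    simp only [hm, Sum.elim_inl]
    apply Finset.card_le_one.2
    intro a ha b hb
    exact Subtype.ext ((Finset.mem_filter.1 ha).2.1.trans (Finset.mem_filter.1 hb).2.1.symm)
  have hkey : ∀ {i i' : Fin d} {y : V} {j j' : Fin (s' y)} {x : {x // x ∈ X}},
      φ i (Sum.inl ⟨y, j⟩) = x → φ i' (Sum.inl ⟨y, j'⟩) = x → i ≠ i' → False := by
    intro i i' y j j' x h1 h2 hne
    by_cases hjj : j = j'
    · subst hjj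
      have h4 : 2 ≤ (univ.filter fun l : Fin d => φ l (Sum.inl ⟨y, j⟩) = x).card :=
        Finset.one_lt_card.2 ⟨i, Finset.mem_filter.2 ⟨Finset.mem_univ _, h1⟩, i',
          Finset.mem_filter.2 ⟨Finset.mem_univ _, h2⟩, hne⟩
      rw [← hmcount] at h4
      have h5 := hm_slot_le ⟨y, j⟩ x
      omega
    · obtain ⟨hmem1, hidx1⟩ := hslot i y j
      obtain ⟨hmem2, hidx2⟩ := hslot i' y j'
      have e1 : φ i (Sum.inl ⟨y, j⟩) = φ i' (Sum.inl ⟨y, j'⟩) := h1.trans h2.symm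
      have e2 : (⟨(φ i (Sum.inl ⟨y, j⟩)).1, hmem1⟩ : {a // a ∈ E0 y})
          = ⟨(φ i' (Sum.inl ⟨y, j'⟩)).1, hmem2⟩ := by
        apply Subtype.ext
        show (φ i (Sum.inl ⟨y, j⟩)).1 = (φ i' (Sum.inl ⟨y, j'⟩)).1
        exact congrArg Subtype.val e1
      have e3 := congrArg (fun e : {a // a ∈ E0 y} => ((eqv y e : ℕ) / d)) e2
      apply hjj
      apply Fin.ext
      exact (hidx1.symm.trans e3).trans hidx2
  have hkey2 : ∀ {i : Fin d} {y y' : V} {j : Fin (s' y)} {j' : Fin (s' y')}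
      {x : {x // x ∈ X}},
      φ i (Sum.inl ⟨y, j⟩) = x → φ i (Sum.inl ⟨y', j'⟩) = x → y = y' := by
    intro i y y' j j' x h1 h2
    have h3 := hφinj i (h1.trans h2.symm)
    exact congrArg Sigma.fst (Sum.inl_injective h3)
  have hLY : ∀ i y, (L i y).Nonempty → y ∈ Y := by
    rintro i y ⟨x, hx⟩
    obtain ⟨j, -⟩ := hLmem.1 hx
    by_contra hy
    have h0 : (j : ℕ) < s' y := j.isLt
    have h1 := hs'nY y hy
    omega
  have hLadj : ∀ i y x, x ∈ L i y → H.Adj y x := by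
    intro i y x hx
    obtain ⟨j, hj⟩ := hLmem.1 hx
    obtain ⟨hmem, -⟩ := hslot i y j
    rw [hj] at hmem
    exact hE0adj hmem
  have hLX : ∀ i y, L i y ⊆ X := by
    intro i y x hx
    obtain ⟨j, hj⟩ := hLmem.1 hx
    rw [← hj]
    exact (φ i (Sum.inl ⟨y, j⟩)).2
  have hLcard : ∀ i y, (L i y).card = s' y := by
    intro i y
    have hinj : Function.Injective (fun j : Fin (s' y) => (φ i (Sum.inl ⟨y, j⟩)).1) := by
      intro a b h
      have h2 : φ i (Sum.inl ⟨y, a⟩) = φ i (Sum.inl ⟨y, b⟩) := Subtype.ext h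
      have h3 := Sum.inl_injective (hφinj i h2)
      simpa using h3
    simp only [hLdef]
    rw [Finset.card_image_of_injective _ hinj, Finset.card_univ, Fintype.card_fin]
  have hLdisj : ∀ i y y', y ≠ y' → Disjoint (L i y) (L i y') := by
    intro i y y' hne
    rw [Finset.disjoint_left]
    intro x hx hx'
    obtain ⟨j, hj⟩ := hLmem.1 hx
    obtain ⟨j', hj'⟩ := hLmem.1 hx'
    have hxX : x ∈ X := hLX i y hx
    exact hne (hkey2 (x := ⟨x, hxX⟩) (Subtype.ext hj) (Subtype.ext hj'))
  have hFdisj : ∀ i j : Fin d, i ≠ j →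
      Disjoint (Finset.univ.biUnion fun y => (L i y).image fun x => s(y, x))
               (Finset.univ.biUnion fun y => (L j y).image fun x => s(y, x)) := by
    intro i j hij
    rw [Finset.disjoint_left]
    intro e hei hej
    simp only [Finset.mem_biUnion, Finset.mem_image, Finset.mem_univ, true_and] at hei hej
    obtain ⟨y, x, hx, rfl⟩ := hei
    obtain ⟨y', x', hx', heq⟩ := hej
    rw [Sym2.eq_iff] at heq
    rcases heq with ⟨h1, h2⟩ | ⟨h1, h2⟩
    · rw [h1, h2] at hx'
      obtain ⟨jj, hjj⟩ := hLmem.1 hx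
      obtain ⟨jj', hjj'⟩ := hLmem.1 hx'
      have hxX : x ∈ X := hLX i y hx
      exact hkey (x := ⟨x, hxX⟩) (Subtype.ext hjj) (Subtype.ext hjj') hij
    · have hyY : y ∈ Y := hLY i y ⟨x, hx⟩
      have hyX : y ∈ X := by
        rw [← h2]
        exact hLX j y' hx'
      exact absurd hyY (Finset.disjoint_left.1 hXY hyX)
  have hFE : ∀ i : Fin d,
      (Finset.univ.biUnion fun y => (L i y).image fun x => s(y, x)) ⊆ H.edgeFinset := by
    intro i e he
    simp only [Finset.mem_biUnion, Finset.mem_image, Finset.mem_univ, true_and] at he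
    obtain ⟨y, x, hx, rfl⟩ := he
    rw [SimpleGraph.mem_edgeFinset, SimpleGraph.mem_edgeSet]
    exact hLadj i y x hx
  have hFallE : (Finset.univ.biUnion
      (fun i : Fin d => Finset.univ.biUnion fun y => (L i y).image fun x => s(y, x)))
      ⊆ H.edgeFinset :=
    Finset.biUnion_subset.2 fun i _ => hFE i
  refine ⟨L, H.edgeFinset \ (Finset.univ.biUnion
      (fun i : Fin d => Finset.univ.biUnion fun y => (L i y).image fun x => s(y, x))),
    hLY, hLadj, ?_, ?_, ?_, ?_, hFdisj, ?_, ?_, ?_⟩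
  · -- insert disjointness
    intro i y y' hne hy hy'
    have hyY := hLY i y hy
    have hy'Y := hLY i y' hy'
    have h1 : y ∉ L i y' := fun h => (Finset.disjoint_left.1 hXY (hLX i y' h)) hyY
    have h2 : y' ∉ L i y := fun h => (Finset.disjoint_left.1 hXY (hLX i y h)) hy'Y
    have h3 := hLdisj i y y' hne
    rw [Finset.disjoint_left]
    intro a ha hb
    rw [Finset.mem_insert] at ha hb
    rcases ha with rfl | ha
    · rcases hb with h | hb
      · exact hne h
      · exact h1 hb
    · rcases hb with rfl | hb
      · exact h2 ha
      · exact (Finset.disjoint_left.1 h3 ha) hb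
  · -- components
    intro i
    apply Finset.card_le_card
    intro y hy
    exact hLY i y (Finset.mem_filter.1 hy).2
  · -- star sizes
    intro i y
    rw [hLcard]
    exact le_trans (hs'le y) (H.degree_le_maxDegree y)
  · -- multiset
    intro i j
    have hfun : (fun y : V => (L i y).card) = fun y : V => (L j y).card := by
      funext y
      rw [hLcard, hLcard]
    rw [hfun]
  · -- disjoint from R
    intro i
    refine Disjoint.mono_left (Finset.subset_biUnion_of_mem
      (fun i : Fin d => Finset.univ.biUnion fun y => (L i y).image fun x => s(y, x))
      (Finset.mem_univ i)) ?_
    exact Finset.sdiff_disjoint.symm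
  · -- union
    exact Finset.union_sdiff_of_subset hFallE
  · -- remainder degree
    intro v
    by_cases hvY : v ∈ Y
    · have hIv : (H.edgeFinset.filter fun e => v ∈ e).card = H.degree v := by
        rw [← SimpleGraph.incidenceFinset_eq_filter, SimpleGraph.card_incidenceFinset_eq_degree]
      have hGv : ((Finset.univ.biUnion
          (fun i : Fin d => Finset.univ.biUnion fun y =>
            (L i y).image fun x => s(y, x))).filter fun e => v ∈ e)
          = Finset.univ.biUnion fun i : Fin d => (L i v).image fun x => s(v, x) := by
        ext e
        simp only [Finset.mem_filter, Finset.mem_biUnion, Finset.mem_image, Finset.mem_univ,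
          true_and]
        constructor
        · rintro ⟨⟨i, y, x, hx, rfl⟩, hv⟩
          rcases Sym2.mem_iff.1 hv with rfl | rfl
          · exact ⟨i, x, hx, rfl⟩
          · have hvX : v ∈ X := hLX i y hx
            exact absurd hvY (Finset.disjoint_left.1 hXY hvX)
        · rintro ⟨i, x, hx, rfl⟩
          exact ⟨⟨i, v, x, hx, rfl⟩, Sym2.mem_mk_left v x⟩
      have hGvcard : (Finset.univ.biUnion fun i : Fin d =>
          (L i v).image fun x => s(v, x)).card = d * s' v := by
        rw [Finset.card_biUnion]
        · have himg : ∀ i : Fin d, ((L i v).image fun x => s(v, x)).card = s' v := by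
            intro i
            have hinj2 : Function.Injective (fun x : V => s(v, x)) := by
              intro a b hab
              rw [Sym2.eq_iff] at hab
              rcases hab with ⟨-, h⟩ | ⟨h1, h2⟩
              · exact h
              · rw [h2, ← h1]
            rw [Finset.card_image_of_injective _ hinj2, hLcard]
          rw [Finset.sum_congr rfl fun i _ => himg i, Finset.sum_const, smul_eq_mul,
            Finset.card_univ, Fintype.card_fin]
        · intro i _ j _ hij
          refine (hFdisj i j hij).mono ?_ ?_
          · exact Finset.subset_biUnion_of_mem
              (fun y => (L i y).image fun x => s(y, x)) (Finset.mem_univ v)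
          · exact Finset.subset_biUnion_of_mem
              (fun y => (L j y).image fun x => s(y, x)) (Finset.mem_univ v)
      have hsub2 : ((Finset.univ.biUnion
          (fun i : Fin d => Finset.univ.biUnion fun y =>
            (L i y).image fun x => s(y, x))).filter fun e => v ∈ e)
          ⊆ H.edgeFinset.filter fun e => v ∈ e :=
        Finset.filter_subset_filter _ hFallE
      have hRv : ((H.edgeFinset \ (Finset.univ.biUnion
          (fun i : Fin d => Finset.univ.biUnion fun y =>
            (L i y).image fun x => s(y, x)))).filter fun e => v ∈ e)
          = (H.edgeFinset.filter fun e => v ∈ e) \ ((Finset.univ.biUnion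
              (fun i : Fin d => Finset.univ.biUnion fun y =>
                (L i y).image fun x => s(y, x))).filter fun e => v ∈ e) := by
        ext e
        simp only [Finset.mem_filter, Finset.mem_sdiff]
        tauto
      rw [hRv, Finset.card_sdiff_of_subset hsub2, hIv, hGv, hGvcard]
      rw [hs'Y v hvY]
      have hmod := Nat.div_add_mod (H.degree v) d
      have hmlt := Nat.mod_lt (H.degree v) hd
      generalize hdq : d * (H.degree v / d) = dq at hmod ⊢
      omega
    · by_cases hvX : v ∈ X
      · calc ((H.edgeFinset \ (Finset.univ.biUnion
            (fun i : Fin d => Finset.univ.biUnion fun y =>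
              (L i y).image fun x => s(y, x)))).filter fun e => v ∈ e).card
            ≤ (H.edgeFinset.filter fun e => v ∈ e).card :=
              Finset.card_le_card (Finset.filter_subset_filter _ Finset.sdiff_subset)
          _ = H.degree v := by
              rw [← SimpleGraph.incidenceFinset_eq_filter,
                SimpleGraph.card_incidenceFinset_eq_degree]
          _ < d := hdeg v hvX
      · have hempty : ((H.edgeFinset \ (Finset.univ.biUnion
            (fun i : Fin d => Finset.univ.biUnion fun y =>
              (L i y).image fun x => s(y, x)))).filter fun e => v ∈ e) = ∅ := by
          rw [Finset.eq_empty_iff_forall_notMem]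
          intro e he
          rw [Finset.mem_filter, Finset.mem_sdiff] at he
          obtain ⟨⟨heE, -⟩, hv⟩ := he
          obtain ⟨x, hx, y, hy, rfl⟩ := hbip e heE
          rcases Sym2.mem_iff.1 hv with rfl | rfl
          · exact hvX hx
          · exact hvY hy
        rw [hempty]
        simpa using hd
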